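/- arXiv:2309.08470 — 2 statements merged into one kernel-verified Lean document; each statement's English description precedes it below -/
import Mathlib

section
/- A quadrilateral (v0∘, v0•, v1∘, v•) whose alternating sum of side lengths vanishes, i.e. |v − v0∘| − |v − v1∘| = |v0• − v0∘| − |v0• − v1∘| where v = v•, admits a circle tangent to the four lines containing its sides (Pitot theorem converse for convex quadrilaterals). -/
set_option maxHeartbeats 1000000

local notation "E2" => EuclideanSpace ℝ (Fin 2)

lemma dist_sq_coord (A B : E2) : dist A B ^ 2 = (A 0 - B 0)^2 + (A 1 - B 1)^2 := by
  rw [EuclideanSpace.dist_eq]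
  rw [Real.sq_sqrt (by positivity)]
  simp [Fin.sum_univ_two, Real.dist_eq, sq_abs]

private lemma foot_calc (u0 u1 v0 v1 : ℝ) :
    ((v0 - ((v0*u0+v1*u1)/(u0^2+u1^2))*u0)^2 + (v1 - ((v0*u0+v1*u1)/(u0^2+u1^2))*u1)^2)
      * (u0^2+u1^2) = (u0*v1 - u1*v0)^2 ∨ (u0^2+u1^2) = 0 := by
  rcases eq_or_ne (u0^2+u1^2) 0 with h | h
  · exact Or.inr h
  · left; field_simp; ring

private lemma line_lb (u0 u1 v0 v1 s : ℝ) :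
    (u0*v1 - u1*v0)^2 ≤ ((v0 - s*u0)^2 + (v1 - s*u1)^2) * (u0^2+u1^2) := by
  nlinarith [sq_nonneg (u0*(v0-s*u0)+u1*(v1-s*u1))]

lemma infDist_line (P Q z : E2) (h : P ≠ Q) :
    Metric.infDist z ((affineSpan ℝ ({P, Q} : Set E2)) : Set E2)
      = |(Q 0 - P 0) * (z 1 - P 1) - (Q 1 - P 1) * (z 0 - P 0)| / dist P Q := by
  have hm : 0 < dist P Q := dist_pos.2 h
  have hm2 : dist P Q ^ 2 = (Q 0 - P 0)^2 + (Q 1 - P 1)^2 := by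
    rw [dist_comm]; exact dist_sq_coord Q P
  have hMpos : (0:ℝ) < (Q 0 - P 0)^2 + (Q 1 - P 1)^2 := hm2 ▸ pow_pos hm 2
  set c : ℝ := (Q 0 - P 0) * (z 1 - P 1) - (Q 1 - P 1) * (z 0 - P 0) with hcdef
  have hK : (0:ℝ) ≤ |c| / dist P Q := by positivity
  apply le_antisymm
  · set t : ℝ := ((z 0 - P 0) * (Q 0 - P 0) + (z 1 - P 1) * (Q 1 - P 1))
        / ((Q 0 - P 0)^2 + (Q 1 - P 1)^2) with htdef
    have hmem : t • (Q - P) + P ∈ (affineSpan ℝ ({P, Q} : Set E2)) := by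
      simpa using smul_vsub_vadd_mem_affineSpan_pair t P Q
    refine le_trans (Metric.infDist_le_dist_of_mem hmem) (le_of_eq ?_)
    have hco : ∀ i, z i - (t • (Q - P) + P) i = (z i - P i) - t * (Q i - P i) := by
      intro i
      simp only [PiLp.add_apply, PiLp.smul_apply, PiLp.sub_apply, smul_eq_mul]
      ring
    have hident := (foot_calc (Q 0 - P 0) (Q 1 - P 1) (z 0 - P 0) (z 1 - P 1)).resolve_right
      (ne_of_gt hMpos)
    have hd2 : dist z (t • (Q - P) + P) ^ 2 = (|c| / dist P Q)^2 := by
      rw [dist_sq_coord, hco 0, hco 1, div_pow, sq_abs, eq_div_iff (by positivity), hm2, htdef]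
      linear_combination hident
    have h0 := dist_nonneg (x := z) (y := t • (Q - P) + P)
    calc dist z (t • (Q - P) + P) = Real.sqrt (dist z (t • (Q - P) + P) ^ 2) :=
          (Real.sqrt_sq h0).symm
      _ = Real.sqrt ((|c| / dist P Q)^2) := by rw [hd2]
      _ = |c| / dist P Q := Real.sqrt_sq hK
  · refine le_of_not_gt fun hlt => ?_
    obtain ⟨y, hy, hdy⟩ := (Metric.infDist_lt_iff
      ⟨P, subset_affineSpan ℝ _ (Set.mem_insert _ _)⟩).1 hlt
    have hy' : (y - P) +ᵥ P ∈ (affineSpan ℝ ({P, Q} : Set E2)) := by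
      simpa using hy
    obtain ⟨s, hs⟩ := (vadd_left_mem_affineSpan_pair (k := ℝ)).1 hy'
    have hyc : ∀ i, z i - y i = (z i - P i) - s * (Q i - P i) := by
      intro i
      have := congrFun (congrArg (fun (v : E2) (i : Fin 2) => v i) hs) i
      simp only [PiLp.smul_apply, PiLp.sub_apply, smul_eq_mul] at this
      have : s * (Q i - P i) = y i - P i := this
      linarith
    have hd2 : (dist z y)^2 = ((z 0 - P 0) - s*(Q 0 - P 0))^2 + ((z 1 - P 1) - s*(Q 1 - P 1))^2 := by
      rw [dist_sq_coord, hyc 0, hyc 1]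
    have key : c^2 ≤ (dist z y)^2 * ((Q 0 - P 0)^2 + (Q 1 - P 1)^2) := by
      rw [hd2]
      exact line_lb (Q 0 - P 0) (Q 1 - P 1) (z 0 - P 0) (z 1 - P 1) s
    rw [lt_div_iff₀ hm] at hdy
    nlinarith [key, hdy, abs_nonneg c, sq_abs c, dist_nonneg (x := z) (y := y), hm2, hm,
      mul_nonneg (dist_nonneg (x := z) (y := y)) hm.le]


noncomputable def pt (x y : ℝ) : EuclideanSpace ℝ (Fin 2) := (WithLp.equiv 2 (Fin 2 → ℝ)).symm ![x, y]

@[simp] lemma pt_apply0 (x y : ℝ) : pt x y 0 = x := rfl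
@[simp] lemma pt_apply1 (x y : ℝ) : pt x y 1 = y := rfl

/-- coordinates of a segment point -/
lemma segment_coord {A C x : E2} (h : x ∈ segment ℝ A C) :
    ∃ t : ℝ, 0 ≤ t ∧ t ≤ 1 ∧ (∀ i, x i = A i + t * (C i - A i)) := by
  rw [segment_eq_image'] at h
  obtain ⟨t, ⟨h0, h1⟩, rfl⟩ := h
  exact ⟨t, h0, h1, fun i => by simp [PiLp.add_apply, PiLp.smul_apply, PiLp.sub_apply]⟩

/-- collinearity from vanishing cross product -/
lemma collinear_of_cross {A B C : E2} (hAB : A ≠ B)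
    (h : (B 0 - A 0) * (C 1 - A 1) - (B 1 - A 1) * (C 0 - A 0) = 0) :
    Collinear ℝ ({A, B, C} : Set E2) := by
  have hM : (B 0 - A 0)^2 + (B 1 - A 1)^2 ≠ 0 := by
    intro h0
    apply hAB
    have h1 : B 0 - A 0 = 0 := by nlinarith [sq_nonneg (B 0 - A 0), sq_nonneg (B 1 - A 1)]
    have h2 : B 1 - A 1 = 0 := by nlinarith [sq_nonneg (B 0 - A 0), sq_nonneg (B 1 - A 1)]
    ext i
    fin_cases i <;> [skip; skip] <;> simp <;> linarith
  rw [collinear_iff_of_mem (Set.mem_insert A _)]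
  refine ⟨B - A, ?_⟩
  intro p hp
  rcases hp with rfl | rfl | rfl
  · exact ⟨0, by simp⟩
  · exact ⟨1, by simp⟩
  · refine ⟨((p 0 - A 0) * (B 0 - A 0) + (p 1 - A 1) * (B 1 - A 1)) /
      ((B 0 - A 0)^2 + (B 1 - A 1)^2), ?_⟩
    have : ∀ i, p i = (((p 0 - A 0) * (B 0 - A 0) + (p 1 - A 1) * (B 1 - A 1)) /
        ((B 0 - A 0)^2 + (B 1 - A 1)^2)) * (B i - A i) + A i := by
      intro i
      fin_cases i
      · simp only [Fin.zero_eta, Fin.mk_one]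
        field_simp
        linear_combination (-(B 1 - A 1)) * h
      · simp only [Fin.zero_eta, Fin.mk_one]
        field_simp
        linear_combination (B 0 - A 0) * h
    ext i
    rw [this i]
    simp [PiLp.add_apply, PiLp.smul_apply, PiLp.sub_apply]

/-- C and D are strictly on the same side of line AB when diagonals cross -/
lemma same_side {A B C D x : E2} (hx1 : x ∈ segment ℝ A C) (hx2 : x ∈ segment ℝ B D)
    (hC : (B 0 - A 0) * (C 1 - A 1) - (B 1 - A 1) * (C 0 - A 0) ≠ 0)
    (hD : (B 0 - A 0) * (D 1 - A 1) - (B 1 - A 1) * (D 0 - A 0) ≠ 0) :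
    0 < ((B 0 - A 0) * (C 1 - A 1) - (B 1 - A 1) * (C 0 - A 0)) *
        ((B 0 - A 0) * (D 1 - A 1) - (B 1 - A 1) * (D 0 - A 0)) := by
  obtain ⟨s, hs0, hs1, hsc⟩ := segment_coord hx1
  obtain ⟨t, ht0, ht1, htc⟩ := segment_coord hx2
  set cC := (B 0 - A 0) * (C 1 - A 1) - (B 1 - A 1) * (C 0 - A 0) with hcC
  set cD := (B 0 - A 0) * (D 1 - A 1) - (B 1 - A 1) * (D 0 - A 0) with hcD
  -- cross(B-A, x-A) computed two ways
  have key : s * cC = t * cD := by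
    have e0 := hsc 0; have e1 := hsc 1
    have f0 := htc 0; have f1 := htc 1
    have expand : (B 0 - A 0) * (x 1 - A 1) - (B 1 - A 1) * (x 0 - A 0) = s * cC := by
      rw [e0, e1, hcC]; ring
    have expand2 : (B 0 - A 0) * (x 1 - A 1) - (B 1 - A 1) * (x 0 - A 0) = t * cD := by
      rw [f0, f1, hcD]; ring
    linarith [expand, expand2]
  rcases lt_or_ge 0 (cC * cD) with h | h
  · exact h
  -- product ≤ 0 and both nonzero: derive contradiction
  exfalso
  have hprod : cC * cD < 0 := lt_of_le_of_ne h (by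
    intro h0
    rcases mul_eq_zero.1 h0 with h1 | h1 <;> [exact hC h1; exact hD h1])
  have hsq : (s * cC) * (t * cD) = s * t * (cC * cD) := by ring
  have h2 : 0 ≤ (s * cC)^2 := sq_nonneg _
  have h3 : (s * cC)^2 = s * t * (cC * cD) := by
    calc (s * cC)^2 = (s * cC) * (s * cC) := sq (s * cC)
      _ = (s * cC) * (t * cD) := by rw [key]
      _ = s * t * (cC * cD) := by ring
  have hst : 0 ≤ s * t := mul_nonneg hs0 ht0
  have hzero : s * cC = 0 := by nlinarith [mul_nonpos_of_nonneg_of_nonpos hst hprod.le]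
  have hs' : s = 0 := by
    rcases mul_eq_zero.1 hzero with h' | h'
    · exact h'
    · exact absurd h' hC
  have ht' : t = 0 := by
    have : t * cD = 0 := by rw [← key, hzero]
    rcases mul_eq_zero.1 this with h' | h'
    · exact h'
    · exact absurd h' hD
  -- then x = A and x = B, so A = B, contradicting hC
  apply hC
  have hA0 : x 0 = A 0 := by rw [hsc 0, hs']; ring
  have hA1 : x 1 = A 1 := by rw [hsc 1, hs']; ring
  have hB0 : x 0 = B 0 := by rw [htc 0, ht']; ring
  have hB1 : x 1 = B 1 := by rw [htc 1, ht']; ring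
  rw [hcC]
  have : B 0 = A 0 := by rw [← hB0, hA0]
  have h2' : B 1 = A 1 := by rw [← hB1, hA1]
  rw [this, h2']; ring

/-- tangent point helper for degenerate cases -/
lemma tangent_pt (P Q : E2) : ∃ (z : E2) (r : ℝ), 0 < r ∧ dist z P = r ∧
    Metric.infDist z ((affineSpan ℝ ({P, Q} : Set E2)) : Set E2) = r := by
  rcases eq_or_ne P Q with rfl | h
  · refine ⟨P + pt 1 0, 1, one_pos, ?_, ?_⟩
    · have : dist (P + pt 1 0) P ^ 2 = 1 := by
        rw [dist_sq_coord]; simp [PiLp.add_apply]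
      nlinarith [dist_nonneg (x := P + pt 1 0) (y := P)]
    · rw [Set.pair_eq_singleton, AffineSubspace.coe_affineSpan_singleton,
        Metric.infDist_singleton]
      have : dist (P + pt 1 0) P ^ 2 = 1 := by
        rw [dist_sq_coord]; simp [PiLp.add_apply]
      nlinarith [dist_nonneg (x := P + pt 1 0) (y := P)]
  · have hm : 0 < dist P Q := dist_pos.2 h
    have hm2 : dist P Q ^ 2 = (Q 0 - P 0)^2 + (Q 1 - P 1)^2 := by
      rw [dist_comm]; exact dist_sq_coord Q P
    set z : E2 := P + (dist P Q)⁻¹ • pt (-(Q 1 - P 1)) (Q 0 - P 0) with hz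
    have hz0 : z 0 - P 0 = (dist P Q)⁻¹ * (-(Q 1 - P 1)) := by
      rw [hz]; simp [PiLp.add_apply, PiLp.smul_apply]
    have hz1 : z 1 - P 1 = (dist P Q)⁻¹ * (Q 0 - P 0) := by
      rw [hz]; simp [PiLp.add_apply, PiLp.smul_apply]
    refine ⟨z, 1, one_pos, ?_, ?_⟩
    · have hd : dist z P ^ 2 = 1 := by
        rw [dist_sq_coord]
        have a0 : z 0 - P 0 = (dist P Q)⁻¹ * (-(Q 1 - P 1)) := hz0
        have a1 : z 1 - P 1 = (dist P Q)⁻¹ * (Q 0 - P 0) := hz1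
        rw [a0, a1]
        field_simp
        linarith [hm2]
      nlinarith [dist_nonneg (x := z) (y := P)]
    · rw [infDist_line P Q z h, hz0, hz1]
      rw [div_eq_one_iff_eq (ne_of_gt hm)]
      have : (Q 0 - P 0) * ((dist P Q)⁻¹ * (Q 0 - P 0)) -
          (Q 1 - P 1) * ((dist P Q)⁻¹ * (-(Q 1 - P 1))) = (dist P Q)⁻¹ * (dist P Q ^2) := by
        rw [hm2]; ring
      rw [this, hm2]
      rw [← hm2, sq, inv_mul_cancel_left₀ (ne_of_gt hm)]
      exact abs_of_pos hm

private lemma tangency (U SP WQ N c F T : ℝ) (hc : c ≠ 0) (hN : N ≠ 0)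
    (e1 : c^2*(U^2+SP^2) = F^2 + T^2)
    (e2 : c^2*(U^2+WQ^2) = F^2 + (T - N*c^2)^2)
    (e3 : SP + WQ = -(N*c)) : F^2 = (U*c)^2 := by
  have h6 : 2*N*c^2*(T + c*SP) = 0 := by
    linear_combination (e2 - e1) + (c^2*(SP-WQ) + N*c^3) * e3
  have h6' : (2*N*c^2) * (T + c*SP) = 0 := by linarith [h6]
  have hne : (2*N*c^2) ≠ 0 := by
    apply mul_ne_zero (mul_ne_zero two_ne_zero hN) (pow_ne_zero 2 hc)
  have h7 : T = -(c*SP) := by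
    have := (mul_eq_zero.1 h6').resolve_left hne
    linarith
  linear_combination (-1) * e1 + (c*SP - T) * h7

private lemma Npos (a b d X Y K L N : ℝ) (ha : 0 < a) (hb : 0 < b) (hd : 0 < d)
    (hX : 0 < X) (hY : 0 < Y)
    (hKlag : K^2 + Y^2 = a^2*d^2) (hLlag : L^2 + X^2 = a^2*b^2)
    (hkey : a*N = X*(a*d+K) + Y*(a*b-L)) : 0 < N := by
  have hKlb : -(a*d) ≤ K := by
    nlinarith [hKlag, sq_nonneg Y, mul_pos ha hd]
  have hLub : L ≤ a*b := by
    nlinarith [hLlag, sq_nonneg X, mul_pos ha hb]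
  rcases eq_or_lt_of_le hKlb with hK0 | hK0
  · exfalso
    have hKsq : K^2 = (a*d)^2 := by rw [← hK0]; ring
    nlinarith [hKlag, hKsq, mul_pos hY hY]
  · have h1 : 0 < X*(a*d+K) := mul_pos hX (by linarith)
    have h2 : 0 ≤ Y*(a*b-L) := mul_nonneg hY.le (by linarith)
    nlinarith [hkey, ha]

private lemma core (p1 p2 q1 q2 s1 s2 a b c d : ℝ)
    (ha2 : a^2 = p1^2+p2^2) (hb2 : b^2 = q1^2+q2^2)
    (hc2 : c^2 = s1^2+s2^2)
    (hd2 : d^2 = (p1+q1+s1)^2+(p2+q2+s2)^2)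
    (ha : 0 < a) (hb : 0 < b) (hc : 0 < c) (hd : 0 < d)
    (hX : 0 < p1*q2 - p2*q1)
    (hY : 0 < p1*(p2+q2+s2) - p2*(p1+q1+s1))
    (hpit : d - c = a - b) :
    ∃ z1 z2 r : ℝ, 0 < r ∧
      p1*z2 - p2*z1 = r*a ∧
      q1*(z2-p2) - q2*(z1-p1) = r*b ∧
      (s1*(z2-p2-q2) - s2*(z1-p1-q1))^2 = (r*c)^2 ∧
      (-(p1+q1+s1))*(z2-(p2+q2+s2)) + (p2+q2+s2)*(z1-(p1+q1+s1)) = r*d := by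
  obtain ⟨X, hXd⟩ : ∃ X:ℝ, X = p1*q2 - p2*q1 := ⟨_, rfl⟩
  obtain ⟨Y, hYd⟩ : ∃ Y:ℝ, Y = p1*(p2+q2+s2) - p2*(p1+q1+s1) := ⟨_, rfl⟩
  obtain ⟨Z, hZd⟩ : ∃ Z:ℝ, Z = (p1+q1+s1)*q2 - (p2+q2+s2)*q1 := ⟨_, rfl⟩
  obtain ⟨L, hLd⟩ : ∃ L:ℝ, L = p1*q1 + p2*q2 := ⟨_, rfl⟩
  obtain ⟨K, hKd⟩ : ∃ K:ℝ, K = p1*(p1+q1+s1) + p2*(p2+q2+s2) := ⟨_, rfl⟩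
  obtain ⟨N, hNd⟩ : ∃ N:ℝ, N = d*X + b*Y + a*Z := ⟨_, rfl⟩
  obtain ⟨NC1, hNC1d⟩ : ∃ W:ℝ, W = Y*(a*q1 - b*p1) - N*q1 := ⟨_, rfl⟩
  obtain ⟨NC2, hNC2d⟩ : ∃ W:ℝ, W = Y*(a*q2 - b*p2) - N*q2 := ⟨_, rfl⟩
  obtain ⟨ND1, hND1d⟩ : ∃ W:ℝ, W = X*(d*p1 + a*(p1+q1+s1)) - N*(p1+q1+s1) := ⟨_, rfl⟩
  obtain ⟨ND2, hND2d⟩ : ∃ W:ℝ, W = X*(d*p2 + a*(p2+q2+s2)) - N*(p2+q2+s2) := ⟨_, rfl⟩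
  obtain ⟨SP, hSPd⟩ : ∃ W:ℝ, W = Y*(a*b - L) - N*b := ⟨_, rfl⟩
  obtain ⟨WQ, hWQd⟩ : ∃ W:ℝ, W = X*(K + a*d) - N*d := ⟨_, rfl⟩
  obtain ⟨F, hFd⟩ : ∃ W:ℝ, W = s1*NC2 - s2*NC1 := ⟨_, rfl⟩
  obtain ⟨T, hTd⟩ : ∃ W:ℝ, W = s1*NC1 + s2*NC2 := ⟨_, rfl⟩
  have hX' : 0 < X := by rw [hXd]; exact hX
  have hY' : 0 < Y := by rw [hYd]; exact hY
  have hKlag : K^2 + Y^2 = a^2*d^2 := by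
    linear_combination ((1)*K + (1)*p2*s2 + (1)*p2*q2 + (1)*p2^2 + (1)*p1*s1 + (1)*p1*q1 + (1)*p1^2) * hKd + ((1)*Y + (-1)*p2*s1 + (-1)*p2*q1 + (1)*p1*s2 + (1)*p1*q2) * hYd + ((-1)*d^2) * ha2 + ((-1)*p2^2 + (-1)*p1^2) * hd2
  have hLlag : L^2 + X^2 = a^2*b^2 := by
    linear_combination ((1)*L + (1)*p2*q2 + (1)*p1*q1) * hLd + ((1)*X + (-1)*p2*q1 + (1)*p1*q2) * hXd + ((-1)*b^2) * ha2 + ((-1)*p2^2 + (-1)*p1^2) * hb2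
  have hkey : a*N = X*(a*d+K) + Y*(a*b-L) := by
    linear_combination ((1)*a) * hNd + ((-1)*X) * hKd + ((1)*Y) * hLd + ((1)*a^2) * hZd + ((1)*p2*q2 + (1)*p1*q1) * hYd + ((-1)*p2*s2 + (-1)*p2*q2 + (-1)*p2^2 + (-1)*p1*s1 + (-1)*p1*q1 + (-1)*p1^2) * hXd + ((1)*q2*s1 + (-1)*q1*s2 + (-1)*p2*q1 + (1)*p1*q2) * ha2
  have hNpos : 0 < N := Npos a b d X Y K L N ha hb hd hX' hY' hKlag hLlag hkey
  have hNne : N ≠ 0 := ne_of_gt hNpos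
  have hq1 : q1*NC2 - q2*NC1 = b*(X*Y) := by
    linear_combination ((-1)*q2) * hNC1d + ((1)*q1) * hNC2d + ((-1)*b*X + (-1)*p2*q1*b + (1)*p1*q2*b) * hYd + ((1)*p2*s1*b + (1)*p2*q1*b + (-1)*p1*s2*b + (-1)*p1*q2*b) * hXd
  have hq2 : q1*NC1 + q2*NC2 = b*SP := by
    linear_combination ((1)*q1) * hNC1d + ((1)*q2) * hNC2d + ((-1)*b) * hSPd + ((1)*b^2 + (-1)*q2^2 + (-1)*q1^2) * hNd + ((1)*b*Y) * hLd + ((1)*a*b^2 + (-1)*q2^2*a + (-1)*q1^2*a) * hZd + ((1)*b^3 + (-1)*a*b^2 + (-1)*q2^2*b + (1)*q2^2*a + (-1)*q1^2*b + (1)*q1^2*a) * hYd + ((1)*b^2*d + (-1)*q2^2*d + (-1)*q1^2*d) * hXd + ((1)*q2*s1*a + (-1)*q1*s2*a + (-1)*p2*s1*b + (1)*p2*s1*a + (-1)*p2*q1*d + (-1)*p2*q1*b + (1)*p1*s2*b + (-1)*p1*s2*a + (1)*p1*q2*d + (1)*p1*q2*b) * hb2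
  have hv1 : (p1+q1+s1)*ND2 - (p2+q2+s2)*ND1 = -(d*(X*Y)) := by
    linear_combination ((-1)*s2 + (-1)*q2 + (-1)*p2) * hND1d + ((1)*s1 + (1)*q1 + (1)*p1) * hND2d + ((1)*d*X) * hYd
  have hv2 : (p1+q1+s1)*ND1 + (p2+q2+s2)*ND2 = d*WQ := by
    linear_combination ((1)*s1 + (1)*q1 + (1)*p1) * hND1d + ((1)*s2 + (1)*q2 + (1)*p2) * hND2d + ((-1)*d) * hWQd + ((1)*d^2 + (-1)*s2^2 + (-1)*s1^2 + (-2)*q2*s2 + (-1)*q2^2 + (-2)*q1*s1 + (-1)*q1^2 + (-2)*p2*s2 + (-2)*p2*q2 + (-1)*p2^2 + (-2)*p1*s1 + (-2)*p1*q1 + (-1)*p1^2) * hNd + ((-1)*d*X) * hKd + ((1)*a*d^2 + (-1)*s2^2*a + (-1)*s1^2*a + (-2)*q2*s2*a + (-1)*q2^2*a + (-2)*q1*s1*a + (-1)*q1^2*a + (-2)*p2*s2*a + (-2)*p2*q2*a + (-1)*p2^2*a + (-2)*p1*s1*a + (-2)*p1*q1*a + (-1)*p1^2*a) * hZd + ((1)*b*d^2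 + (-1)*s2^2*b + (-1)*s1^2*b + (-2)*q2*s2*b + (-1)*q2^2*b + (-2)*q1*s1*b + (-1)*q1^2*b + (-2)*p2*s2*b + (-2)*p2*q2*b + (-1)*p2^2*b + (-2)*p1*s1*b + (-2)*p1*q1*b + (-1)*p1^2*b) * hYd + ((1)*d^3 + (-1)*a*d^2 + (-1)*s2^2*d + (1)*s2^2*a + (-1)*s1^2*d + (1)*s1^2*a + (-2)*q2*s2*d + (2)*q2*s2*a + (-1)*q2^2*d + (1)*q2^2*a + (-2)*q1*s1*d + (2)*q1*s1*a + (-1)*q1^2*d + (1)*q1^2*a + (-2)*p2*s2*d + (2)*p2*s2*a + (-2)*p2*q2*d + (2)*p2*q2*a + (-1)*p2^2*d + (1)*p2^2*a + (-2)*p1*s1*d + (2)*p1*s1*a + (-2)*p1*q1*d + (2)*p1*q1*a + (-1)*p1^2*d + (1)*p1^2*a) * hXd + ((1)*q2*s1*a + (-1)*q1*s2*a + (-1)*p2*s1*b + (-1)*p2*q1*d + (-1)*p2*q1*b + (1)*p1*s2*b + (1)*p1*q2*d + (1)*p1*q2*b) * hd2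
  have hCsq' : b^2*(NC1^2+NC2^2) = b^2*((X*Y)^2+SP^2) := by
    linear_combination (NC1^2+NC2^2)*hb2 + (q1*NC2 - q2*NC1 + b*(X*Y))*hq1 +
      (q1*NC1 + q2*NC2 + b*SP)*hq2
  have hCsq : NC1^2+NC2^2 = (X*Y)^2+SP^2 :=
    mul_left_cancel₀ (pow_ne_zero 2 (ne_of_gt hb)) hCsq'
  have hDsq' : d^2*(ND1^2+ND2^2) = d^2*((X*Y)^2+WQ^2) := by
    linear_combination (ND1^2+ND2^2)*hd2 +
      ((p1+q1+s1)*ND2 - (p2+q2+s2)*ND1 - d*(X*Y))*hv1 +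
      ((p1+q1+s1)*ND1 + (p2+q2+s2)*ND2 + d*WQ)*hv2
  have hDsq : ND1^2+ND2^2 = (X*Y)^2+WQ^2 :=
    mul_left_cancel₀ (pow_ne_zero 2 (ne_of_gt hd)) hDsq'
  have hCl : c^2*(NC1^2+NC2^2) = F^2 + T^2 := by
    linear_combination ((-1)*F + (1)*s2*NC1 + (-1)*s1*NC2) * hFd + ((-1)*T + (-1)*s2*NC2 + (-1)*s1*NC1) * hTd + ((1)*NC2^2 + (1)*NC1^2) * hc2
  have hrel1 : ND1 = NC1 - N*s1 := by
    linear_combination ((1)) * hND1d + ((-1)) * hNC1d + ((-1)*p1) * hNd + ((-1)*p1*a) * hZd + ((-1)*q1*a) * hYd + ((1)*s1*a + (1)*q1*a + (1)*p1*a) * hXd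
  have hrel2 : ND2 = NC2 - N*s2 := by
    linear_combination ((1)) * hND2d + ((-1)) * hNC2d + ((-1)*p2) * hNd + ((-1)*p2*a) * hZd + ((-1)*q2*a) * hYd + ((1)*s2*a + (1)*q2*a + (1)*p2*a) * hXd
  have hDl : c^2*(ND1^2+ND2^2) = F^2 + (T - N*c^2)^2 := by
    linear_combination ((1)*c^2*ND1 + (1)*c^2*NC1 + (-1)*s1*c^2*N) * hrel1 + ((1)*c^2*ND2 + (1)*c^2*NC2 + (-1)*s2*c^2*N) * hrel2 + ((-1)*F + (1)*s2*NC1 + (-1)*s1*NC2) * hFd + ((-1)*T + (2)*c^2*N + (-1)*s2*NC2 + (-1)*s1*NC1) * hTd + ((1)*NC2^2 + (1)*NC1^2 + (-1)*c^2*N^2) * hc2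
  have e3 : SP + WQ = -(N*c) := by
    linear_combination ((1)) * hSPd + ((1)) * hWQd + ((-1)*d + (1)*c + (-1)*b) * hNd + ((1)*X) * hKd + ((-1)*Y) * hLd + ((-1)*a*d + (1)*a*c + (-1)*a*b) * hZd + ((-1)*b*d + (1)*b*c + (-1)*b^2 + (1)*a*b + (-1)*p2*q2 + (-1)*p1*q1) * hYd + ((-1)*d^2 + (1)*c*d + (-1)*b*d + (1)*a*d + (1)*p2*s2 + (1)*p2*q2 + (1)*p2^2 + (1)*p1*s1 + (1)*p1*q1 + (1)*p1^2) * hXd + ((-1)*q2*s1*a + (1)*q1*s2*a + (1)*p2*s1*b + (1)*p2*q1*d + (1)*p2*q1*b + (1)*p2*q1*a + (-1)*p1*s2*b + (-1)*p1*q2*d + (-1)*p1*q2*b + (-1)*p1*q2*a) * hpit + ((-1)*q2*s1 + (1)*q1*s2 + (1)*p2*q1 + (-1)*p1*q2) * ha2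
  have e1 : c^2*((X*Y)^2+SP^2) = F^2 + T^2 := by linear_combination hCl - c^2*hCsq
  have e2 : c^2*((X*Y)^2+WQ^2) = F^2 + (T - N*c^2)^2 := by
    linear_combination hDl - c^2*hDsq
  have hF2 : F^2 = (X*Y*c)^2 := tangency (X*Y) SP WQ N c F T (ne_of_gt hc) hNne e1 e2 e3
  have hnum : s1*(X*(d*p2 + a*(p2+q2+s2)) - N*(p2+q2)) -
      s2*(X*(d*p1 + a*(p1+q1+s1)) - N*(p1+q1)) = F := by
    linear_combination ((-1)) * hFd + ((1)*s2) * hNC1d + ((-1)*s1) * hNC2d + ((-1)*p2*s1 + (1)*p1*s2) * hNd + ((-1)*p2*s1*a + (1)*p1*s2*a) * hZd + ((-1)*q2*s1*a + (1)*q1*s2*a) * hYd + ((1)*q2*s1*a + (-1)*q1*s2*a + (1)*p2*s1*a + (-1)*p1*s2*a) * hXd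
  have hpoly1 : p1*(X*(d*p2 + a*(p2+q2+s2))) - p2*(X*(d*p1 + a*(p1+q1+s1))) = X*Y*a := by
    linear_combination ((-1)*a*X) * hYd
  have hpoly2 : q1*(X*(d*p2 + a*(p2+q2+s2)) - N*p2) - q2*(X*(d*p1 + a*(p1+q1+s1)) - N*p1)
      = X*Y*b := by
    linear_combination ((-1)*p2*q1 + (1)*p1*q2) * hNd + ((-1)*p2*q1*a + (1)*p1*q2*a) * hZd + ((-1)*b*X + (-1)*p2*q1*b + (1)*p1*q2*b) * hYd + ((-1)*q2*s1*a + (1)*q1*s2*a + (1)*p2*s1*b + (1)*p2*q1*b + (1)*p2*q1*a + (-1)*p1*s2*b + (-1)*p1*q2*b + (-1)*p1*q2*a) * hXd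
  have hpoly4 : (-(p1+q1+s1))*(X*(d*p2 + a*(p2+q2+s2)) - N*(p2+q2+s2)) +
      (p2+q2+s2)*(X*(d*p1 + a*(p1+q1+s1)) - N*(p1+q1+s1)) = X*Y*d := by
    linear_combination ((-1)*d*X) * hYd
  refine ⟨(X*(d*p1 + a*(p1+q1+s1)))/N, (X*(d*p2 + a*(p2+q2+s2)))/N, X*Y/N,
    div_pos (mul_pos hX' hY') hNpos, ?_, ?_, ?_, ?_⟩
  · calc p1*((X*(d*p2 + a*(p2+q2+s2)))/N) - p2*((X*(d*p1 + a*(p1+q1+s1)))/N)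
        = (p1*(X*(d*p2 + a*(p2+q2+s2))) - p2*(X*(d*p1 + a*(p1+q1+s1))))/N := by ring
      _ = (X*Y*a)/N := by rw [hpoly1]
      _ = X*Y/N*a := by ring
  · calc q1*((X*(d*p2 + a*(p2+q2+s2)))/N - p2) - q2*((X*(d*p1 + a*(p1+q1+s1)))/N - p1)
        = (q1*(X*(d*p2 + a*(p2+q2+s2)) - N*p2) - q2*(X*(d*p1 + a*(p1+q1+s1)) - N*p1))/N := by
          field_simp; try ring
      _ = (X*Y*b)/N := by rw [hpoly2]
      _ = X*Y/N*b := by ring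
  · have hinner : s1*((X*(d*p2 + a*(p2+q2+s2)))/N - p2 - q2) -
        s2*((X*(d*p1 + a*(p1+q1+s1)))/N - p1 - q1) = F/N := by
      rw [← hnum]
      field_simp; try ring
    rw [hinner, div_pow, show (X*Y/N*c)^2 = (X*Y*c)^2/N^2 by ring, hF2]
  · calc (-(p1+q1+s1))*((X*(d*p2 + a*(p2+q2+s2)))/N - (p2+q2+s2)) +
        (p2+q2+s2)*((X*(d*p1 + a*(p1+q1+s1)))/N - (p1+q1+s1))
        = ((-(p1+q1+s1))*(X*(d*p2 + a*(p2+q2+s2)) - N*(p2+q2+s2)) +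
          (p2+q2+s2)*(X*(d*p1 + a*(p1+q1+s1)) - N*(p1+q1+s1)))/N := by
          field_simp; try ring
      _ = (X*Y*d)/N := by rw [hpoly4]
      _ = X*Y/N*d := by ring

lemma main_lemma (A B C D : E2) (hab : A ≠ B) (hbc : B ≠ C) (hcd : C ≠ D) (hda : D ≠ A)
    (hXh : 0 < (B 0 - A 0)*(C 1 - A 1) - (B 1 - A 1)*(C 0 - A 0))
    (hYh : 0 < (B 0 - A 0)*(D 1 - A 1) - (B 1 - A 1)*(D 0 - A 0))
    (hpitot : dist D A - dist D C = dist B A - dist B C) :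
    ∃ (z : E2) (r : ℝ), 0 < r ∧
      Metric.infDist z ((affineSpan ℝ ({A, B} : Set E2)) : Set E2) = r ∧
      Metric.infDist z ((affineSpan ℝ ({B, C} : Set E2)) : Set E2) = r ∧
      Metric.infDist z ((affineSpan ℝ ({C, D} : Set E2)) : Set E2) = r ∧
      Metric.infDist z ((affineSpan ℝ ({D, A} : Set E2)) : Set E2) = r := by
  have hdAB := dist_pos.2 hab
  have hdBC := dist_pos.2 hbc
  have hdCD := dist_pos.2 hcd
  have hdDA := dist_pos.2 hda
  obtain ⟨z1, z2, r, hr, h1, h2, h3, h4⟩ :=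
    core (B 0 - A 0) (B 1 - A 1) (C 0 - B 0) (C 1 - B 1) (D 0 - C 0) (D 1 - C 1)
      (dist A B) (dist B C) (dist C D) (dist D A)
      (by linear_combination dist_sq_coord A B)
      (by linear_combination dist_sq_coord B C)
      (by linear_combination dist_sq_coord C D)
      (by linear_combination dist_sq_coord D A)
      hdAB hdBC hdCD hdDA
      (by nlinarith [hXh])
      (by nlinarith [hYh])
      (by rw [dist_comm C D, dist_comm A B]; linarith [hpitot, dist_comm D C, dist_comm B A,
            dist_comm C D, dist_comm A B])
  set z : E2 := pt (A 0 + z1) (A 1 + z2) with hzdef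
  have hz0 : z 0 = A 0 + z1 := rfl
  have hz1 : z 1 = A 1 + z2 := rfl
  refine ⟨z, r, hr, ?_, ?_, ?_, ?_⟩
  · rw [infDist_line A B z hab]
    have hnum : (B 0 - A 0) * (z 1 - A 1) - (B 1 - A 1) * (z 0 - A 0) = r * dist A B := by
      rw [hz0, hz1]; linear_combination h1
    rw [hnum, abs_of_pos (mul_pos hr hdAB)]
    exact mul_div_cancel_right₀ r (ne_of_gt hdAB)
  · rw [infDist_line B C z hbc]
    have hnum : (C 0 - B 0) * (z 1 - B 1) - (C 1 - B 1) * (z 0 - B 0) = r * dist B C := by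
      rw [hz0, hz1]; linear_combination h2
    rw [hnum, abs_of_pos (mul_pos hr hdBC)]
    exact mul_div_cancel_right₀ r (ne_of_gt hdBC)
  · rw [infDist_line C D z hcd]
    have hsq : ((D 0 - C 0) * (z 1 - C 1) - (D 1 - C 1) * (z 0 - C 0))^2 = (r * dist C D)^2 := by
      rw [hz0, hz1]; linear_combination h3
    have habs : |(D 0 - C 0) * (z 1 - C 1) - (D 1 - C 1) * (z 0 - C 0)| = r * dist C D := by
      calc |(D 0 - C 0) * (z 1 - C 1) - (D 1 - C 1) * (z 0 - C 0)|
          = Real.sqrt (((D 0 - C 0) * (z 1 - C 1) - (D 1 - C 1) * (z 0 - C 0))^2) :=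
            (Real.sqrt_sq_eq_abs _).symm
        _ = Real.sqrt ((r * dist C D)^2) := by rw [hsq]
        _ = r * dist C D := Real.sqrt_sq (by positivity)
    rw [habs]
    exact mul_div_cancel_right₀ r (ne_of_gt hdCD)
  · rw [infDist_line D A z hda]
    have hnum : (A 0 - D 0) * (z 1 - D 1) - (A 1 - D 1) * (z 0 - D 0) = r * dist D A := by
      rw [hz0, hz1]; linear_combination h4
    rw [hnum, abs_of_pos (mul_pos hr hdDA)]
    exact mul_div_cancel_right₀ r (ne_of_gt hdDA)

/-- converse of Pitot's theorem. If `A, B, C, D` (here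
`A = v0∘`, `B = v0•`, `C = v1∘`, `D = v•`) are in convex position in cyclic order
(no vertex in the hull of the others and the diagonals meet), and the alternating sum of
side-lengths vanishes — written as `dist D A - dist D C = dist B A - dist B C` — then
there is a circle tangent to the four lines containing the sides. -/
theorem pitot_converse
    (A B C D : EuclideanSpace ℝ (Fin 2))
    (hconv : ∀ x ∈ ({A, B, C, D} : Set (EuclideanSpace ℝ (Fin 2))),
      x ∉ convexHull ℝ (({A, B, C, D} : Set (EuclideanSpace ℝ (Fin 2))) \ {x}))
    (hdiag : (segment ℝ A C ∩ segment ℝ B D).Nonempty)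
    (hpitot : dist D A - dist D C = dist B A - dist B C) :
    ∃ (z : EuclideanSpace ℝ (Fin 2)) (r : ℝ), 0 < r ∧
      Metric.infDist z ((affineSpan ℝ ({A, B} : Set (EuclideanSpace ℝ (Fin 2)))) :
        Set (EuclideanSpace ℝ (Fin 2))) = r ∧
      Metric.infDist z ((affineSpan ℝ ({B, C} : Set (EuclideanSpace ℝ (Fin 2)))) :
        Set (EuclideanSpace ℝ (Fin 2))) = r ∧
      Metric.infDist z ((affineSpan ℝ ({C, D} : Set (EuclideanSpace ℝ (Fin 2)))) :
        Set (EuclideanSpace ℝ (Fin 2))) = r ∧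
      Metric.infDist z ((affineSpan ℝ ({D, A} : Set (EuclideanSpace ℝ (Fin 2)))) :
        Set (EuclideanSpace ℝ (Fin 2))) = r := by
  obtain ⟨x, hx1, hx2⟩ := hdiag
  have hhull : ∀ y P Q : E2, y ∈ ({A, B, C, D} : Set E2) → P ∈ ({A, B, C, D} : Set E2) →
      Q ∈ ({A, B, C, D} : Set E2) → P ≠ y → Q ≠ y → y ∈ segment ℝ P Q → False := by
    intro y P Q hy hP hQ hPy hQy hseg
    refine hconv y hy ?_
    have hsub : ({P, Q} : Set E2) ⊆ ({A, B, C, D} : Set E2) \ {y} := by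
      intro w hw
      rcases hw with rfl | hw
      · exact ⟨hP, by simpa using hPy⟩
      · rw [Set.mem_singleton_iff] at hw; subst hw
        exact ⟨hQ, by simpa using hQy⟩
    exact convexHull_mono hsub (by rw [convexHull_pair]; exact hseg)
  have memA : A ∈ ({A, B, C, D} : Set E2) := by simp
  have memB : B ∈ ({A, B, C, D} : Set E2) := by simp
  have memC : C ∈ ({A, B, C, D} : Set E2) := by simp
  have memD : D ∈ ({A, B, C, D} : Set E2) := by simp
  rcases eq_or_ne A C with hAC | hAC
  · -- A = C : degenerate
    rw [← hAC] at hx1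
    have hxA : x = A := by simpa [segment_same] using hx1
    rw [hxA] at hx2
    rcases eq_or_ne A B with hab | hab
    · -- A = B = C
      obtain ⟨z, r, hr, hzP, hline⟩ := tangent_pt A D
      refine ⟨z, r, hr, ?_, ?_, ?_, ?_⟩
      · rw [← hab, Set.pair_eq_singleton, AffineSubspace.coe_affineSpan_singleton,
          Metric.infDist_singleton]; exact hzP
      · rw [← hab, ← hAC, Set.pair_eq_singleton, AffineSubspace.coe_affineSpan_singleton,
          Metric.infDist_singleton]; exact hzP
      · rw [← hAC]; exact hline
      · rw [Set.pair_comm D A]; exact hline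
    · rcases eq_or_ne D A with hda | hda
      · -- A = C = D
        obtain ⟨z, r, hr, hzP, hline⟩ := tangent_pt A B
        refine ⟨z, r, hr, ?_, ?_, ?_, ?_⟩
        · exact hline
        · rw [← hAC, Set.pair_comm B A]; exact hline
        · rw [← hAC, hda, Set.pair_eq_singleton, AffineSubspace.coe_affineSpan_singleton,
            Metric.infDist_singleton]; exact hzP
        · rw [hda, Set.pair_eq_singleton, AffineSubspace.coe_affineSpan_singleton,
            Metric.infDist_singleton]; exact hzP
      · exact absurd hx2 (fun h => hhull A B D memA memB memD (Ne.symm hab) hda h)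
  · rcases eq_or_ne B D with hBD | hBD
    · -- B = D : degenerate
      rw [← hBD] at hx2
      have hxB : x = B := by simpa [segment_same] using hx2
      rw [hxB] at hx1
      rcases eq_or_ne A B with hab | hab
      · -- A = B = D
        obtain ⟨z, r, hr, hzP, hline⟩ := tangent_pt A C
        refine ⟨z, r, hr, ?_, ?_, ?_, ?_⟩
        · rw [← hab, Set.pair_eq_singleton, AffineSubspace.coe_affineSpan_singleton,
            Metric.infDist_singleton]; exact hzP
        · rw [← hab]; exact hline
        · rw [← hBD, ← hab, Set.pair_comm C A]; exact hline
        · rw [← hBD, ← hab, Set.pair_eq_singleton, AffineSubspace.coe_affineSpan_singleton,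
            Metric.infDist_singleton]; exact hzP
      · rcases eq_or_ne C B with hcb | hcb
        · -- B = C = D
          obtain ⟨z, r, hr, hzP, hline⟩ := tangent_pt B A
          refine ⟨z, r, hr, ?_, ?_, ?_, ?_⟩
          · rw [Set.pair_comm A B]; exact hline
          · rw [hcb, Set.pair_eq_singleton, AffineSubspace.coe_affineSpan_singleton,
              Metric.infDist_singleton]; exact hzP
          · rw [hcb, ← hBD, Set.pair_eq_singleton, AffineSubspace.coe_affineSpan_singleton,
              Metric.infDist_singleton]; exact hzP
          · rw [← hBD]; exact hline
        · exact absurd hx1 (fun h => hhull B A C memB memA memC hab hcb h)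
    · -- A ≠ C, B ≠ D
      rcases eq_or_ne A B with hab | hab
      · -- A = B : Pitot forces A between D and C
        exfalso
        have hDA : D ≠ A := fun h => hBD (hab.symm.trans h.symm)
        have h1 : dist D A + dist A C = dist D C := by
          rw [← hab] at hpitot
          have := dist_self A
          linarith [hpitot]
        exact hhull A D C memA memD memC hDA (Ne.symm hAC)
          (mem_segment_iff_wbtw.2 (dist_add_dist_eq_iff.1 h1))
      rcases eq_or_ne B C with hbc | hbc
      · exfalso
        have h1 : dist D B + dist B A = dist D A := by
          rw [← hbc] at hpitot
          have := dist_self B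
          linarith [hpitot]
        exact hhull B D A memB memD memA (Ne.symm hBD) hab
          (mem_segment_iff_wbtw.2 (dist_add_dist_eq_iff.1 h1))
      rcases eq_or_ne C D with hcd | hcd
      · exfalso
        have hAD : A ≠ D := fun h => hAC (h.trans hcd.symm)
        have h1 : dist B D + dist D A = dist B A := by
          rw [hcd] at hpitot
          have h2 := dist_self D
          have h3 := dist_comm D A
          linarith [hpitot]
        exact hhull D B A memD memB memA hBD hAD
          (mem_segment_iff_wbtw.2 (dist_add_dist_eq_iff.1 h1))
      rcases eq_or_ne D A with hda | hda
      · exfalso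
        have h1 : dist B A + dist A C = dist B C := by
          have h0 : dist D A = 0 := by rw [hda, dist_self]
          have h2 : dist D C = dist A C := by rw [hda]
          linarith [hpitot]
        exact hhull A B C memA memB memC (Ne.symm hab) (Ne.symm hAC)
          (mem_segment_iff_wbtw.2 (dist_add_dist_eq_iff.1 h1))
      -- all distinct now
      have hcol : ∀ P Q R : E2, P ∈ ({A, B, C, D} : Set E2) → Q ∈ ({A, B, C, D} : Set E2) →
          R ∈ ({A, B, C, D} : Set E2) → P ≠ Q → Q ≠ R → P ≠ R →
          (Q 0 - P 0) * (R 1 - P 1) - (Q 1 - P 1) * (R 0 - P 0) ≠ 0 := by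
        intro P Q R hP hQ hR hPQ hQR hPR h0
        rcases (collinear_of_cross hPQ h0).wbtw_or_wbtw_or_wbtw with hw | hw | hw
        · exact hhull Q P R hQ hP hR hPQ (Ne.symm hQR) (mem_segment_iff_wbtw.2 hw)
        · exact hhull R Q P hR hQ hP hQR hPR (mem_segment_iff_wbtw.2 hw)
        · exact hhull P R Q hP hR hQ (Ne.symm hPR) (Ne.symm hPQ) (mem_segment_iff_wbtw.2 hw)
      have cABC : (B 0 - A 0) * (C 1 - A 1) - (B 1 - A 1) * (C 0 - A 0) ≠ 0 :=
        hcol A B C memA memB memC hab hbc hAC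
      have cABD : (B 0 - A 0) * (D 1 - A 1) - (B 1 - A 1) * (D 0 - A 0) ≠ 0 :=
        hcol A B D memA memB memD hab hBD (Ne.symm hda)
      have cADC : (D 0 - A 0) * (C 1 - A 1) - (D 1 - A 1) * (C 0 - A 0) ≠ 0 :=
        hcol A D C memA memD memC (Ne.symm hda) (fun h => hcd h.symm) hAC
      have cADB : (D 0 - A 0) * (B 1 - A 1) - (D 1 - A 1) * (B 0 - A 0) ≠ 0 := by
        intro h0; apply cABD; linarith [h0]
      have hprod1 : 0 < ((B 0 - A 0) * (C 1 - A 1) - (B 1 - A 1) * (C 0 - A 0)) *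
          ((B 0 - A 0) * (D 1 - A 1) - (B 1 - A 1) * (D 0 - A 0)) :=
        same_side hx1 hx2 cABC cABD
      have hx2' : x ∈ segment ℝ D B := by rw [segment_symm]; exact hx2
      have hprod2 : 0 < ((D 0 - A 0) * (C 1 - A 1) - (D 1 - A 1) * (C 0 - A 0)) *
          ((D 0 - A 0) * (B 1 - A 1) - (D 1 - A 1) * (B 0 - A 0)) :=
        same_side hx1 hx2' cADC cADB
      rcases lt_or_gt_of_ne cABC with hneg | hpos
      · -- reversed orientation: use A D C B
        have hYpos : 0 < (D 0 - A 0) * (B 1 - A 1) - (D 1 - A 1) * (B 0 - A 0) := by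
          nlinarith [hprod1, hneg]
        have hXpos : 0 < (D 0 - A 0) * (C 1 - A 1) - (D 1 - A 1) * (C 0 - A 0) := by
          nlinarith [hprod2, hYpos]
        obtain ⟨z, r, hr, g1, g2, g3, g4⟩ := main_lemma A D C B (Ne.symm hda)
          (fun h => hcd h.symm) (Ne.symm hbc) (Ne.symm hab) hXpos hYpos (by linarith [hpitot])
        refine ⟨z, r, hr, ?_, ?_, ?_, ?_⟩
        · rw [Set.pair_comm A B]; exact g4
        · rw [Set.pair_comm B C]; exact g3
        · rw [Set.pair_comm C D]; exact g2
        · rw [Set.pair_comm D A]; exact g1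
      · have hYpos : 0 < (B 0 - A 0) * (D 1 - A 1) - (B 1 - A 1) * (D 0 - A 0) := by
          nlinarith [hprod1, hpos]
        exact main_lemma A B C D hab hbc hcd hda hpos hYpos hpitot
end

section
/- Let ϑ: U → ℝ be differentiable at a point z with |ϑ_z| ≤ κ/2 for some κ < 1 (where ϑ_z = (∂_x ϑ − i ∂_y ϑ)/2 is the Wirtinger derivative, and ϑ_z̄ = conj(ϑ_z) since ϑ is real-valued). If ζ is a conformal parametrization satisfying z_ζ z̄_ζ = (ϑ_ζ)² and |z_ζ| > |ϑ_ζ| ≥ |z̄_ζ|, and ν := −ϑ_ζ / z_ζ, then |ν| ≤ 2|ϑ_z| ≤ κ < 1. -/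
/-- bound on the Beltrami coefficient. With the chain rule
`ϑ_ζ = ϑ_z z_ζ + conj(ϑ_z) z̄_ζ` (for real-valued `ϑ`), the conformality relation
`z_ζ z̄_ζ = ϑ_ζ²` with `|z_ζ| > |ϑ_ζ| ≥ |z̄_ζ|`, and `|ϑ_z| ≤ κ/2` with `κ < 1`,
the coefficient `ν = -ϑ_ζ / z_ζ` satisfies `|ν| ≤ 2|ϑ_z| ≤ κ < 1`. -/
theorem beltrami_coefficient_bound (κ : ℝ) (hκ : κ < 1)
    (ϑz zζ zbζ ϑζ ν : ℂ)
    (hchain : ϑζ = ϑz * zζ + (starRingEnd ℂ) ϑz * zbζ)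
    (hconf : zζ * zbζ = ϑζ ^ 2)
    (h1 : ‖ϑζ‖ < ‖zζ‖)
    (h2 : ‖zbζ‖ ≤ ‖ϑζ‖)
    (hbound : ‖ϑz‖ ≤ κ / 2)
    (hν : ν = -ϑζ / zζ) :
    ‖ν‖ ≤ 2 * ‖ϑz‖ ∧ 2 * ‖ϑz‖ ≤ κ := by
  have hzpos : 0 < ‖zζ‖ := lt_of_le_of_lt (norm_nonneg _) h1
  have key : ‖ϑζ‖ ≤ 2 * ‖ϑz‖ * ‖zζ‖ := by
    calc ‖ϑζ‖ ≤ ‖ϑz * zζ‖ + ‖(starRingEnd ℂ) ϑz * zbζ‖ := by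
          rw [hchain]; exact norm_add_le _ _
      _ = ‖ϑz‖ * ‖zζ‖ + ‖ϑz‖ * ‖zbζ‖ := by
          simp [map_mul]
      _ ≤ ‖ϑz‖ * ‖zζ‖ + ‖ϑz‖ * ‖zζ‖ := by
          gcongr
          exact le_trans h2 h1.le
      _ = 2 * ‖ϑz‖ * ‖zζ‖ := by ring
  constructor
  · rw [hν, norm_div, norm_neg]
    rw [div_le_iff₀ hzpos]
    exact key
  · linarith
end
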